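/- arXiv:1503.04486 — 4 statements merged into one kernel-verified Lean document; each statement's English description precedes it below -/
import Mathlib

section
/- Let A be an m×n real matrix with rank(A) ≤ 3, and suppose there is a column index j₀ such that A_{i j₀} > 0 for every row i. Then there exist x, y : Fin m → ℝ and a, b, c : Fin n → ℝ such that sgn(A_{ij}) = sgn(a_j·x_i + b_j·y_i + c_j) for all i ∈ [m] and j ∈ [n]. -/
lemma sign_div_pos {a c : ℝ} (hc : 0 < c) : Real.sign (a / c) = Real.sign a := by
  rcases lt_trichotomy a 0 with h | h | h
  · rw [Real.sign_of_neg h, Real.sign_of_neg (div_neg_of_neg_of_pos h hc)]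
  · simp [h]
  · rw [Real.sign_of_pos h, Real.sign_of_pos (div_pos h hc)]

/-- If `A` is an `m × n` real matrix of rank at most 3 with a strictly positive
column `j₀`, then there are points `(x i, y i)` and line coefficients `(a j, b j, c j)` with
`sgn (A i j) = sgn (a j * x i + b j * y i + c j)` for all `i, j`. -/
theorem stmt_1 (m n : ℕ) (A : Matrix (Fin m) (Fin n) ℝ) (hrank : A.rank ≤ 3)
    (j₀ : Fin n) (hpos : ∀ i : Fin m, 0 < A i j₀) :
    ∃ (x y : Fin m → ℝ) (a b c : Fin n → ℝ),
      ∀ (i : Fin m) (j : Fin n),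
        Real.sign (A i j) = Real.sign (a j * x i + b j * y i + c j) := by
  rcases Nat.eq_zero_or_pos m with hm | hm
  · exact ⟨0, 0, 0, 0, 0, fun i => absurd i.isLt (by omega)⟩
  have i₀ : Fin m := ⟨0, hm⟩
  -- normalized matrix
  set B : Matrix (Fin m) (Fin n) ℝ := fun i j => A i j / A i j₀ with hBdef
  have hsign : ∀ i j, Real.sign (A i j) = Real.sign (B i j) := fun i j =>
    (sign_div_pos (hpos i)).symm
  have hB1 : ∀ i, B i j₀ = 1 := fun i => div_self (hpos i).ne'
  -- row space
  set W : Submodule ℝ (Fin n → ℝ) := Submodule.span ℝ (Set.range A) with hWdef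
  have hWrank : Module.finrank ℝ W ≤ 3 := by
    rw [hWdef]; rw [A.rank_eq_finrank_span_row] at hrank; exact hrank
  have hBW : ∀ i, B i ∈ W := by
    intro i
    have : B i = (A i j₀)⁻¹ • A i := by
      funext j; simp [hBdef, div_eq_inv_mul]
    rw [this]
    exact Submodule.smul_mem _ _ (Submodule.subset_span ⟨i, rfl⟩)
  set w3 : Fin n → ℝ := B i₀ with hw3def
  -- the subspace of the row space vanishing at j₀
  set W₀ : Submodule ℝ (Fin n → ℝ) :=
    W ⊓ LinearMap.ker (LinearMap.proj (R := ℝ) (φ := fun _ : Fin n => ℝ) j₀) with hW₀def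
  have hW₀lt : W₀ < W := by
    refine lt_of_le_of_ne inf_le_left ?_
    intro h
    have : w3 ∈ W₀ := h ▸ hBW i₀
    have h0 : w3 j₀ = 0 := this.2
    simp only [hw3def, hB1 i₀] at h0
    norm_num at h0
  have hW₀rank : Module.finrank ℝ W₀ ≤ 2 := by
    have := Submodule.finrank_lt_finrank_of_lt hW₀lt
    omega
  have hv : ∀ i, B i - w3 ∈ W₀ := by
    intro i
    refine ⟨sub_mem (hBW i) (hBW i₀), ?_⟩
    show B i j₀ - w3 j₀ = 0
    rw [hB1 i, hw3def, hB1 i₀]; ring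
  -- obtain spanning pair
  obtain ⟨k, hk, ⟨bas⟩⟩ : ∃ k, k ≤ 2 ∧ Nonempty (Module.Basis (Fin k) ℝ W₀) :=
    ⟨Module.finrank ℝ W₀, hW₀rank, ⟨Module.finBasis ℝ W₀⟩⟩
  have main : ∃ u1 u2 : Fin n → ℝ, ∀ v, (hv : v ∈ W₀) →
      ∃ s t : ℝ, v = s • u1 + t • u2 := by
    interval_cases k
    · refine ⟨0, 0, fun v hvW => ⟨0, 0, ?_⟩⟩
      have h := bas.sum_repr ⟨v, hvW⟩
      rw [Finset.univ_eq_empty, Finset.sum_empty] at h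
      have : v = 0 := congrArg Subtype.val h.symm
      simp [this]
    · refine ⟨(bas 0 : Fin n → ℝ), 0, fun v hvW => ⟨bas.repr ⟨v, hvW⟩ 0, 0, ?_⟩⟩
      have h := bas.sum_repr ⟨v, hvW⟩
      rw [Fin.sum_univ_one] at h
      have h2 := congrArg Subtype.val h
      simp only [Submodule.coe_smul] at h2
      rw [zero_smul, add_zero]
      exact h2.symm
    · refine ⟨(bas 0 : Fin n → ℝ), (bas 1 : Fin n → ℝ),
        fun v hvW => ⟨bas.repr ⟨v, hvW⟩ 0, bas.repr ⟨v, hvW⟩ 1, ?_⟩⟩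
      have h := bas.sum_repr ⟨v, hvW⟩
      rw [Fin.sum_univ_two] at h
      have h2 := congrArg Subtype.val h
      simp only [Submodule.coe_add, Submodule.coe_smul] at h2
      exact h2.symm
  obtain ⟨u1, u2, hmain⟩ := main
  choose x y hxy using fun i => hmain (B i - w3) (hv i)
  refine ⟨x, y, u1, u2, w3, fun i j => ?_⟩
  have hij : B i j = u1 j * x i + u2 j * y i + w3 j := by
    have := congrFun (hxy i) j
    simp only [Pi.sub_apply, Pi.add_apply, Pi.smul_apply, smul_eq_mul] at this
    linarith
  rw [hsign, hij]
end

section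
/- Let S be an m×n generalized sign pattern matrix such that some column j₀ of S has all entries equal to +1. Then minrank(S) ≤ 3 if and only if there exist points (x_i, y_i) ∈ ℝ² for i ∈ [m] and coefficients (a_j, b_j, c_j) ∈ ℝ³ for j ∈ [n] such that sgn(a_j·x_i + b_j·y_i + c_j) = S_{ij} for all i ∈ [m] and j ∈ [n]. -/
open Finset Matrix

lemma pad (d : ℕ) (hd : d ≤ 3) (f : Fin d → ℝ) :
    (∑ k : Fin 3, if h : (k : ℕ) < d then f ⟨k, h⟩ else 0) = ∑ l : Fin d, f l := by
  have h2 : (∑ l : Fin d, f l) = ∑ l : Fin d, (if h : (l : ℕ) < d then f ⟨l, h⟩ else 0) :=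
    Finset.sum_congr rfl fun l _ => by simp
  rw [h2, Fin.sum_univ_eq_sum_range (fun k => if h : k < d then f ⟨k, h⟩ else 0) 3,
    Fin.sum_univ_eq_sum_range (fun k => if h : k < d then f ⟨k, h⟩ else 0) d]
  refine (Finset.sum_subset (Finset.range_subset_range.mpr hd) ?_).symm
  intro x _ hx
  rw [Finset.mem_range, not_lt] at hx
  exact dif_neg (by omega)

lemma factor {m n : ℕ} (A : Matrix (Fin m) (Fin n) ℝ) (h : A.rank ≤ 3) :
    ∃ (r : Fin m → Fin 3 → ℝ) (s : Fin n → Fin 3 → ℝ),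
      ∀ i j, A i j = ∑ k : Fin 3, r i k * s j k := by
  set W := Submodule.span ℝ (Set.range Aᵀ) with hWdef
  have hW : Module.finrank ℝ W ≤ 3 := by
    rw [A.rank_eq_finrank_span_cols] at h; exact h
  set d := Module.finrank ℝ W with hd
  let b : Module.Basis (Fin d) ℝ W := Module.finBasis ℝ W
  have hmem : ∀ j, Aᵀ j ∈ W := fun j => Submodule.subset_span ⟨j, rfl⟩
  refine ⟨fun i k => if h : (k : ℕ) < d then ((b ⟨k, h⟩ : W) : Fin m → ℝ) i else 0,
          fun j k => if h : (k : ℕ) < d then b.repr ⟨Aᵀ j, hmem j⟩ ⟨k, h⟩ else 0, ?_⟩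
  intro i j
  have hj : ((⟨Aᵀ j, hmem j⟩ : W) : Fin m → ℝ) =
      ((∑ l : Fin d, b.repr ⟨Aᵀ j, hmem j⟩ l • b l : W) : Fin m → ℝ) := by
    rw [b.sum_repr ⟨Aᵀ j, hmem j⟩]
  have hji : A i j = ∑ l : Fin d, ((b l : W) : Fin m → ℝ) i * b.repr ⟨Aᵀ j, hmem j⟩ l := by
    have : A i j = ((⟨Aᵀ j, hmem j⟩ : W) : Fin m → ℝ) i := rfl
    rw [this, hj]
    push_cast [Submodule.coe_sum]
    simp [Finset.sum_apply, mul_comm]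
  rw [hji, ← pad d hW]
  refine Finset.sum_congr rfl fun k _ => ?_
  by_cases hk : (k : ℕ) < d
  · simp [hk]
  · simp [hk]

lemma sign_div_pos_s2 {t p : ℝ} (hp : 0 < p) : Real.sign (t / p) = Real.sign t := by
  rcases lt_trichotomy t 0 with h | h | h
  · rw [Real.sign_of_neg h, Real.sign_of_neg (div_neg_of_neg_of_pos h hp)]
  · simp [h, Real.sign_zero]
  · rw [Real.sign_of_pos h, Real.sign_of_pos (div_pos h hp)]

lemma sign_pos_of_eq_one {t : ℝ} (h : Real.sign t = 1) : 0 < t := by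
  rcases lt_trichotomy t 0 with h' | h' | h'
  · rw [Real.sign_of_neg h'] at h; norm_num at h
  · rw [h', Real.sign_zero] at h; norm_num at h
  · exact h'

/-- The minimum rank of a generalized sign pattern matrix `S`: the minimum of `rank A`
over all real matrices `A` whose entrywise sign equals `S`. -/
noncomputable def minrank {m n : ℕ} (S : Matrix (Fin m) (Fin n) ℝ) : ℕ :=
  sInf {r : ℕ | ∃ A : Matrix (Fin m) (Fin n) ℝ,
    (∀ i j, Real.sign (A i j) = S i j) ∧ A.rank = r}

/-- For a generalized sign pattern matrix `S` having an all-`+1` column `j₀`,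
`minrank S ≤ 3` iff there are points `(x i, y i)` and line coefficients `(a j, b j, c j)`
with `sgn (a j * x i + b j * y i + c j) = S i j` for all `i, j`. -/
theorem stmt_2 (m n : ℕ) (S : Matrix (Fin m) (Fin n) ℝ)
    (hS : ∀ i j, S i j = -1 ∨ S i j = 0 ∨ S i j = 1)
    (j₀ : Fin n) (hcol : ∀ i : Fin m, S i j₀ = 1) :
    minrank S ≤ 3 ↔
      ∃ (x y : Fin m → ℝ) (a b c : Fin n → ℝ),
        ∀ (i : Fin m) (j : Fin n),
          Real.sign (a j * x i + b j * y i + c j) = S i j := by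
  constructor
  · intro hle
    rcases Nat.eq_zero_or_pos m with hm | hm
    · subst hm
      exact ⟨Fin.elim0, Fin.elim0, 0, 0, 0, fun i _ => i.elim0⟩
    have hne : {r : ℕ | ∃ A : Matrix (Fin m) (Fin n) ℝ,
        (∀ i j, Real.sign (A i j) = S i j) ∧ A.rank = r}.Nonempty := by
      refine ⟨S.rank, S, fun i j => ?_, rfl⟩
      rcases hS i j with h | h | h <;> rw [h] <;>
        simp [Real.sign_of_neg, Real.sign_of_pos, Real.sign_zero]
    obtain ⟨A, hsign, hrank⟩ := Nat.sInf_mem hne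
    have hA3 : A.rank ≤ 3 := hrank.le.trans hle
    obtain ⟨r, s, hfac⟩ := factor A hA3
    have hpos : ∀ i, 0 < A i j₀ := fun i =>
      sign_pos_of_eq_one (by rw [hsign i j₀, hcol i])
    set v : Fin 3 → ℝ := s j₀ with hv
    have hf : ∀ i j, A i j = r i 0 * s j 0 + r i 1 * s j 1 + r i 2 * s j 2 := by
      intro i j; rw [hfac i j, Fin.sum_univ_three]
    have hp : ∀ i, A i j₀ = r i 0 * v 0 + r i 1 * v 1 + r i 2 * v 2 := fun i => hf i j₀
    have hpne : ∀ i, r i 0 * v 0 + r i 1 * v 1 + r i 2 * v 2 ≠ 0 := fun i =>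
      (hp i) ▸ (hpos i).ne'
    obtain ⟨k₀, hk₀⟩ : ∃ k, v k ≠ 0 := by
      by_contra hcon
      push_neg at hcon
      have h1 := hpne ⟨0, hm⟩
      simp [hcon] at h1
    have main : ∀ (x y : Fin m → ℝ) (a b c : Fin n → ℝ),
        (∀ i j, a j * x i + b j * y i + c j = A i j / A i j₀) →
        ∃ (x y : Fin m → ℝ) (a b c : Fin n → ℝ),
          ∀ i j, Real.sign (a j * x i + b j * y i + c j) = S i j := by
      intro x y a b c heq
      refine ⟨x, y, a, b, c, fun i j => ?_⟩
      rw [heq i j, sign_div_pos_s2 (hpos i), hsign i j]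
    fin_cases k₀
    · refine main (fun i => r i 1 / A i j₀) (fun i => r i 2 / A i j₀)
        (fun j => s j 1 - v 1 * s j 0 / v 0) (fun j => s j 2 - v 2 * s j 0 / v 0)
        (fun j => s j 0 / v 0) (fun i j => ?_)
      have hk : v 0 ≠ 0 := by simpa using hk₀
      beta_reduce
      rw [hf i j, hp i]
      field_simp [hpne i]
      linear_combination (-s j 0) * mul_inv_cancel₀ (hpne i)
    · refine main (fun i => r i 0 / A i j₀) (fun i => r i 2 / A i j₀)
        (fun j => s j 0 - v 0 * s j 1 / v 1) (fun j => s j 2 - v 2 * s j 1 / v 1)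
        (fun j => s j 1 / v 1) (fun i j => ?_)
      have hk : v 1 ≠ 0 := by simpa using hk₀
      beta_reduce
      rw [hf i j, hp i]
      field_simp [hpne i]
      linear_combination (-s j 1) * mul_inv_cancel₀ (hpne i)
    · refine main (fun i => r i 0 / A i j₀) (fun i => r i 1 / A i j₀)
        (fun j => s j 0 - v 0 * s j 2 / v 2) (fun j => s j 1 - v 1 * s j 2 / v 2)
        (fun j => s j 2 / v 2) (fun i j => ?_)
      have hk : v 2 ≠ 0 := by simpa using hk₀
      beta_reduce
      rw [hf i j, hp i]
      field_simp [hpne i]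
      linear_combination (-s j 2) * mul_inv_cancel₀ (hpne i)
  · rintro ⟨x, y, a, b, c, h⟩
    have hB : (Matrix.of fun i j => a j * x i + b j * y i + c j) =
        (Matrix.of fun i (k : Fin 3) => ![x i, y i, 1] k) *
        (Matrix.of fun (k : Fin 3) j => ![a j, b j, c j] k) := by
      ext i j
      simp [Matrix.mul_apply, Fin.sum_univ_three]
      ring
    have hrank : (Matrix.of fun i j => a j * x i + b j * y i + c j).rank ≤ 3 := by
      rw [hB]
      refine (Matrix.rank_mul_le_right _ _).trans ?_
      exact (Matrix.rank_le_card_height _).trans (by simp)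
    exact le_trans (Nat.sInf_le ⟨_, fun i j => h i j, rfl⟩) hrank
end

section
/- Let V be a linear subspace of ℝ^m of dimension d with d ≥ 1. Then the number of sign vectors s ∈ {-1, +1}^m (i.e., with no zero entries) realized by V is at most 2·(C(m-1, 0) + C(m-1, 1) + ⋯ + C(m-1, d-1)), where C(a, b) denotes the binomial coefficient. -/
open Module Finset

/-- The set of sign vectors realized by a subspace. -/
def signSet (m : ℕ) (V : Submodule ℝ (Fin m → ℝ)) : Set (Fin m → ℝ) :=
  {s | (∀ i, s i = -1 ∨ s i = 1) ∧ ∃ v ∈ V, ∀ i, Real.sign (v i) = s i}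

lemma signSet_finite (m : ℕ) (V : Submodule ℝ (Fin m → ℝ)) : (signSet m V).Finite := by
  have hfin : (Set.pi Set.univ (fun _ : Fin m => ({-1, 1} : Set ℝ))).Finite :=
    Set.Finite.pi (fun _ => (Set.finite_singleton (1 : ℝ)).insert _)
  apply hfin.subset
  intro s hs
  rw [Set.mem_pi]
  intro i _
  rcases hs.1 i with h | h <;> simp [h]

lemma pos_of_sign_eq_one {x : ℝ} (h : Real.sign x = 1) : 0 < x := by
  rcases lt_trichotomy x 0 with hx | hx | hx
  · rw [Real.sign_of_neg hx] at h; norm_num at h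
  · rw [hx, Real.sign_zero] at h; norm_num at h
  · exact hx

lemma neg_of_sign_eq_neg_one {x : ℝ} (h : Real.sign x = -1) : x < 0 := by
  rcases lt_trichotomy x 0 with hx | hx | hx
  · exact hx
  · rw [hx, Real.sign_zero] at h; norm_num at h
  · rw [Real.sign_of_pos hx] at h; norm_num at h

lemma sign_combo {a b x y : ℝ} (ha : 0 < a) (hb : 0 < b)
    (h : Real.sign x = Real.sign y) : Real.sign (a * x + b * y) = Real.sign x := by
  rcases lt_trichotomy x 0 with hx | hx | hx
  · have hy : y < 0 := neg_of_sign_eq_neg_one (by rw [← h, Real.sign_of_neg hx])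
    rw [Real.sign_of_neg hx, Real.sign_of_neg (by nlinarith)]
  · have hy : y = 0 := by
      rw [← Real.sign_eq_zero_iff, ← h, hx, Real.sign_zero]
    rw [hx, hy]; simp
  · have hy : 0 < y := pos_of_sign_eq_one (by rw [← h, Real.sign_of_pos hx])
    rw [Real.sign_of_pos hx, Real.sign_of_pos (by nlinarith)]

section Step

variable (m : ℕ)

/-- Forget the last coordinate, as a linear map. -/
noncomputable def proj : (Fin (m + 1) → ℝ) →ₗ[ℝ] (Fin m → ℝ) :=
  LinearMap.funLeft ℝ ℝ (Fin.castSucc)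

@[simp] lemma proj_apply (v : Fin (m + 1) → ℝ) (i : Fin m) :
    proj m v i = v i.castSucc := rfl

/-- The deletion–restriction inequality for sign-vector counts. -/
lemma step (V : Submodule ℝ (Fin (m + 1) → ℝ)) :
    (signSet (m + 1) V).ncard ≤
      (signSet m (V.map (proj m))).ncard +
      (signSet m ((V ⊓ LinearMap.ker (LinearMap.proj (Fin.last m) :
          (Fin (m+1) → ℝ) →ₗ[ℝ] ℝ)).map (proj m))).ncard := by
  classical
  set K := LinearMap.ker (LinearMap.proj (Fin.last m) : (Fin (m+1) → ℝ) →ₗ[ℝ] ℝ) with hK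
  set S := signSet (m + 1) V with hS
  set T := signSet m (V.map (proj m)) with hT
  set U := signSet m ((V ⊓ K).map (proj m)) with hU
  have hSfin := signSet_finite (m + 1) V
  have hTfin := signSet_finite m (V.map (proj m))
  have hUT : U ⊆ T := by
    rintro s ⟨h1, v, hv, h2⟩
    exact ⟨h1, v, Submodule.map_mono inf_le_left hv, h2⟩
  -- projection sends S into T
  have hproj : ∀ s ∈ S, Fin.init s ∈ T := by
    rintro s ⟨h1, v, hv, h2⟩
    refine ⟨fun i => h1 _, proj m v, Submodule.mem_map_of_mem hv, fun i => ?_⟩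
    simpa [Fin.init] using h2 i.castSucc
  -- if two distinct elements of S project to the same vector, it lies in U
  have merge : ∀ s ∈ S, ∀ t ∈ S, Fin.init s = Fin.init t → s ≠ t → Fin.init s ∈ U := by
    rintro s ⟨hs1, v, hv, hs2⟩ t ⟨ht1, w, hw, ht2⟩ hinit hne
    have hlast : s (Fin.last m) ≠ t (Fin.last m) := by
      intro h
      apply hne
      funext i
      rcases Fin.eq_castSucc_or_eq_last i with ⟨j, rfl⟩ | rfl
      · exact congrFun hinit j
      · exact h
    have hsa : Real.sign (v (Fin.last m)) = s (Fin.last m) := hs2 _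
    have hsb : Real.sign (w (Fin.last m)) = t (Fin.last m) := ht2 _
    set a := v (Fin.last m)
    set b := w (Fin.last m)
    -- a and b have opposite (nonzero) signs
    have hab : (0 < a ∧ b < 0) ∨ (a < 0 ∧ 0 < b) := by
      rcases hs1 (Fin.last m) with h1 | h1 <;> rcases ht1 (Fin.last m) with h2 | h2
      · exact absurd (h1.trans h2.symm) hlast
      · exact Or.inr ⟨neg_of_sign_eq_neg_one (hsa.trans h1),
          pos_of_sign_eq_one (hsb.trans h2)⟩
      · exact Or.inl ⟨pos_of_sign_eq_one (hsa.trans h1),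
          neg_of_sign_eq_neg_one (hsb.trans h2)⟩
      · exact absurd (h1.trans h2.symm) hlast
    have hapos : 0 < |a| := by rcases hab with ⟨h, _⟩ | ⟨h, _⟩ <;> simp [abs_pos, ne_of_gt h, ne_of_lt h]
    have hbpos : 0 < |b| := by rcases hab with ⟨_, h⟩ | ⟨_, h⟩ <;> simp [abs_pos, ne_of_gt h, ne_of_lt h]
    set u := |b| • v + |a| • w with hu
    have huV : u ∈ V := V.add_mem (V.smul_mem _ hv) (V.smul_mem _ hw)
    have hulast : u (Fin.last m) = 0 := by
      have : u (Fin.last m) = |b| * a + |a| * b := by simp [hu]; rfl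
      rw [this]
      rcases hab with ⟨h1, h2⟩ | ⟨h1, h2⟩
      · rw [abs_of_pos h1, abs_of_neg h2]; ring
      · rw [abs_of_neg h1, abs_of_pos h2]; ring
    have husign : ∀ i : Fin m, Real.sign (u i.castSucc) = s i.castSucc := by
      intro i
      have hst : s i.castSucc = t i.castSucc := congrFun hinit i
      have : Real.sign (v i.castSucc) = Real.sign (w i.castSucc) := by
        rw [hs2, ht2, hst]
      have := sign_combo hbpos hapos this
      simpa [hu, hs2 i.castSucc] using this
    refine ⟨fun i => hs1 _, proj m u, Submodule.mem_map_of_mem ⟨huV, ?_⟩, fun i => ?_⟩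
    · simpa [hK, LinearMap.mem_ker] using hulast
    · simpa [Fin.init] using husign i
  -- split S into three pieces
  set A := {s ∈ S | Fin.init s ∉ U} with hA
  set B1 := {s ∈ S | Fin.init s ∈ U ∧ s (Fin.last m) = 1} with hB1
  set B2 := {s ∈ S | Fin.init s ∈ U ∧ s (Fin.last m) = -1} with hB2
  have hcover : S ⊆ A ∪ B1 ∪ B2 := by
    intro s hs
    by_cases h : Fin.init s ∈ U
    · rcases hs.1 (Fin.last m) with h1 | h1
      · exact Or.inr ⟨hs, h, h1⟩
      · exact Or.inl (Or.inr ⟨hs, h, h1⟩)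
    · exact Or.inl (Or.inl ⟨hs, h⟩)
  have hAfin : A.Finite := hSfin.subset (Set.sep_subset _ _)
  have hB1fin : B1.Finite := hSfin.subset (Set.sep_subset _ _)
  have hB2fin : B2.Finite := hSfin.subset (Set.sep_subset _ _)
  have hsplit : S.ncard ≤ A.ncard + B1.ncard + B2.ncard := by
    calc S.ncard ≤ (A ∪ B1 ∪ B2).ncard :=
          Set.ncard_le_ncard hcover (((hAfin.union hB1fin).union hB2fin))
      _ ≤ (A ∪ B1).ncard + B2.ncard := Set.ncard_union_le _ _
      _ ≤ A.ncard + B1.ncard + B2.ncard := by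
          gcongr
          exact Set.ncard_union_le _ _
  -- A injects into T \ U
  have hAcard : A.ncard ≤ (T \ U).ncard := by
    have hinj : Set.InjOn (fun s => Fin.init s) A := by
      intro s hsA t htA h
      by_contra hne
      exact hsA.2 (merge s hsA.1 t htA.1 h hne)
    have himg : (fun s => Fin.init s) '' A ⊆ T \ U := by
      rintro _ ⟨s, hsA, rfl⟩
      exact ⟨hproj s hsA.1, hsA.2⟩
    calc A.ncard = ((fun s => Fin.init s) '' A).ncard :=
          (Set.ncard_image_of_injOn hinj).symm
      _ ≤ (T \ U).ncard := Set.ncard_le_ncard himg hTfin.diff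
  -- B1 and B2 each inject into U
  have hBcard : ∀ c : ℝ, ∀ B, B = {s ∈ S | Fin.init s ∈ U ∧ s (Fin.last m) = c} →
      B.ncard ≤ U.ncard := by
    intro c B hB
    have hinj : Set.InjOn (fun s => Fin.init s) B := by
      intro s hsB t htB h
      funext i
      rcases Fin.eq_castSucc_or_eq_last i with ⟨j, rfl⟩ | rfl
      · exact congrFun h j
      · rw [hB] at hsB htB
        rw [hsB.2.2, htB.2.2]
    have himg : (fun s => Fin.init s) '' B ⊆ U := by
      rintro _ ⟨s, hsB, rfl⟩
      rw [hB] at hsB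
      exact hsB.2.1
    calc B.ncard = ((fun s => Fin.init s) '' B).ncard :=
          (Set.ncard_image_of_injOn hinj).symm
      _ ≤ U.ncard := Set.ncard_le_ncard himg (hTfin.subset hUT)
  have hTU : (T \ U).ncard + U.ncard = T.ncard :=
    Set.ncard_diff_add_ncard_of_subset hUT hTfin
  have := hBcard 1 B1 rfl
  have := hBcard (-1) B2 rfl
  omega

end Step

lemma pascal_sum (n d : ℕ) :
    ∑ k ∈ range (d + 1), (n + 1).choose k =
      ∑ k ∈ range (d + 1), n.choose k + ∑ k ∈ range d, n.choose k := by
  induction d with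
  | zero => simp
  | succ e ihd =>
    rw [Finset.sum_range_succ (fun k => (n + 1).choose k) (e + 1),
      Finset.sum_range_succ (fun k => n.choose k) (e + 1),
      Finset.sum_range_succ (fun k => n.choose k) e, ihd, Nat.choose_succ_succ]
    simp only [Nat.succ_eq_add_one]
    have := Finset.sum_range_succ (fun k => n.choose k) e
    omega

/-- Main induction: a subspace of dimension at most `d` realizes at most
`2 * ∑_{k<d} C(m-1,k)` full sign vectors. -/
lemma key : ∀ m d : ℕ, 1 ≤ d → ∀ V : Submodule ℝ (Fin m → ℝ),
    Module.finrank ℝ V ≤ d →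
    (signSet m V).ncard ≤ 2 * ∑ k ∈ range d, Nat.choose (m - 1) k := by
  intro m
  induction m with
  | zero =>
    intro d hd V _
    have hsub : (signSet 0 V).Subsingleton := fun s _ t _ => funext (fun i => i.elim0)
    have h1 : (signSet 0 V).ncard ≤ 1 := by
      rcases (signSet 0 V).eq_empty_or_nonempty with h | ⟨a, ha⟩
      · simp [h]
      · rw [hsub.eq_singleton_of_mem ha, Set.ncard_singleton]
    have h2 : 1 ≤ ∑ k ∈ range d, Nat.choose (0 - 1) k := by
      calc 1 = Nat.choose (0 - 1) 0 := by simp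
        _ ≤ ∑ k ∈ range d, Nat.choose (0 - 1) k :=
          Finset.single_le_sum (fun _ _ => Nat.zero_le _) (Finset.mem_range.mpr hd)
    omega
  | succ m ih =>
    intro d hd V hV
    have hterm : 1 ≤ ∑ k ∈ range d, Nat.choose (m + 1 - 1) k := by
      calc 1 = Nat.choose (m + 1 - 1) 0 := by simp
        _ ≤ _ := Finset.single_le_sum (fun _ _ => Nat.zero_le _) (Finset.mem_range.mpr hd)
    rcases Nat.eq_zero_or_pos m with rfl | hm
    · -- ambient dimension 1 : at most two sign vectors
      have hsub : signSet 1 V ⊆ {fun _ => (-1 : ℝ), fun _ => (1 : ℝ)} := by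
        intro s hs
        rcases hs.1 0 with h | h
        · left; funext i; rw [Subsingleton.elim i 0]; exact h
        · right; funext i; rw [Subsingleton.elim i 0]; exact h
      calc (signSet 1 V).ncard ≤ ({fun _ => (-1 : ℝ), fun _ => (1 : ℝ)} :
              Set (Fin 1 → ℝ)).ncard :=
            Set.ncard_le_ncard hsub ((Set.finite_singleton _).insert _)
        _ ≤ 2 := le_trans (Set.ncard_insert_le _ _) (by simp)
        _ ≤ _ := by omega
    · rcases (signSet (m + 1) V).eq_empty_or_nonempty with hemp | ⟨s0, hs01, v0, hv0, hs02⟩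
      · simp [hemp]
      · -- V is not contained in the last-coordinate hyperplane
        set K := LinearMap.ker (LinearMap.proj (Fin.last m) : (Fin (m+1) → ℝ) →ₗ[ℝ] ℝ) with hKdef
        have hv0last : v0 (Fin.last m) ≠ 0 := by
          intro h
          have := hs02 (Fin.last m)
          rw [h, Real.sign_zero] at this
          rcases hs01 (Fin.last m) with h1 | h1 <;> rw [h1] at this <;> norm_num at this
        have hVK : ¬ V ≤ K := by
          intro h
          exact hv0last (h hv0)
        have hlt : V ⊓ K < V := by
          rcases lt_or_eq_of_le (inf_le_left : V ⊓ K ≤ V) with h | h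
          · exact h
          · exact absurd (h ▸ inf_le_right : V ≤ K) hVK
        have hWrank : Module.finrank ℝ ↥(V ⊓ K) ≤ d - 1 := by
          have := Submodule.finrank_lt_finrank_of_lt hlt
          omega
        have hW'rank : Module.finrank ℝ ↥((V ⊓ K).map (proj m)) ≤ d - 1 :=
          le_trans (Submodule.finrank_map_le _ _) hWrank
        have hV'rank : Module.finrank ℝ ↥(V.map (proj m)) ≤ d :=
          le_trans (Submodule.finrank_map_le _ _) hV
        have hT := ih d hd (V.map (proj m)) hV'rank
        have hUbound : (signSet m ((V ⊓ K).map (proj m))).ncard ≤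
            2 * ∑ k ∈ range (d - 1), Nat.choose (m - 1) k := by
          rcases Nat.lt_or_ge d 2 with hd2 | hd2
          · -- d = 1 : the restricted subspace is trivial, so no sign vectors
            have hd1 : d = 1 := by omega
            have hzero : Module.finrank ℝ ↥((V ⊓ K).map (proj m)) = 0 := by omega
            have hbot : (V ⊓ K).map (proj m) = ⊥ :=
              Submodule.finrank_eq_zero.mp hzero
            have : signSet m ((V ⊓ K).map (proj m)) = ∅ := by
              rw [Set.eq_empty_iff_forall_notMem]
              rintro s ⟨h1, v, hv, h2⟩
              rw [hbot, Submodule.mem_bot] at hv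
              have := h2 ⟨0, hm⟩
              rw [hv] at this
              simp only [Pi.zero_apply, Real.sign_zero] at this
              rcases h1 ⟨0, hm⟩ with h | h <;> rw [h] at this <;> norm_num at this
            simp [this]
          · exact ih (d - 1) (by omega) _ hW'rank
        have hstep := step m V
        rw [← hKdef] at hstep
        -- Pascal's identity for the partial sums
        obtain ⟨e, rfl⟩ : ∃ e, d = e + 1 := ⟨d - 1, by omega⟩
        obtain ⟨n, rfl⟩ : ∃ n, m = n + 1 := ⟨m - 1, by omega⟩
        have hpascal := pascal_sum n e
        simp only [Nat.add_sub_cancel] at *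
        omega

/-- A linear subspace `V ⊆ ℝ^m` of dimension `d ≥ 1` realizes at most
`2 * (C(m-1,0) + ⋯ + C(m-1,d-1))` sign vectors with entries in `{-1, +1}`. -/
theorem stmt_4 (m d : ℕ) (hd : 1 ≤ d) (V : Submodule ℝ (Fin m → ℝ))
    (hV : Module.finrank ℝ V = d) :
    Set.ncard {s : Fin m → ℝ |
        (∀ i, s i = -1 ∨ s i = 1) ∧ ∃ v ∈ V, ∀ i, Real.sign (v i) = s i}
      ≤ 2 * ∑ k ∈ Finset.range d, Nat.choose (m - 1) k :=
  key m d hd V hV.le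
end

section
/- Let V be a linear subspace of ℝ^m with dim V ≤ d, and let U ⊆ [m] be a set of coordinates with |U| = d + 1. Then there exists a sign assignment s : U → {-1, +1} such that no vector v ∈ V satisfies sgn(v_i) = s_i for all i ∈ U. -/
lemma sign_mul_pos_of_sign_eq {x y : ℝ} (hy : y ≠ 0) (h : Real.sign x = Real.sign y) :
    0 < x * y := by
  rcases lt_trichotomy y 0 with hy' | hy' | hy'
  · rw [Real.sign_of_neg hy'] at h
    have hx : x < 0 := by
      by_contra hx
      push_neg at hx
      rcases hx.lt_or_eq with hx | hx
      · rw [Real.sign_of_pos hx] at h; norm_num at h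
      · rw [← hx, Real.sign_zero] at h; norm_num at h
    exact mul_pos_of_neg_of_neg hx hy'
  · exact absurd hy' hy
  · rw [Real.sign_of_pos hy'] at h
    have hx : 0 < x := by
      by_contra hx
      push_neg at hx
      rcases hx.lt_or_eq with hx | hx
      · rw [Real.sign_of_neg hx] at h; norm_num at h
      · rw [hx, Real.sign_zero] at h; norm_num at h
    exact mul_pos hx hy'

/-- If `V ⊆ ℝ^m` has dimension at most `d` and `U` is a set of `d + 1`
coordinates, then there is a `{-1, +1}` sign assignment on `U` that no vector of `V`
achieves on all coordinates of `U`. -/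
theorem stmt_6 (m d : ℕ) (V : Submodule ℝ (Fin m → ℝ))
    (hV : Module.finrank ℝ V ≤ d) (U : Finset (Fin m)) (hU : U.card = d + 1) :
    ∃ s : Fin m → ℝ, (∀ i ∈ U, s i = -1 ∨ s i = 1) ∧
      ∀ v ∈ V, ¬ (∀ i ∈ U, Real.sign (v i) = s i) := by
  classical
  -- restriction map
  let L : (Fin m → ℝ) →ₗ[ℝ] EuclideanSpace ℝ ↥U :=
    (WithLp.linearEquiv 2 ℝ (↥U → ℝ)).symm.toLinearMap ∘ₗ
      LinearMap.funLeft ℝ ℝ (Subtype.val : ↥U → Fin m)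
  set W : Submodule ℝ (EuclideanSpace ℝ ↥U) := V.map L with hW
  have hWrank : Module.finrank ℝ W ≤ d := le_trans (Submodule.finrank_map_le L V) hV
  have hErank : Module.finrank ℝ (EuclideanSpace ℝ ↥U) = d + 1 := by
    simp [hU]
  have hWne : W ≠ ⊤ := by
    intro h
    rw [h, finrank_top, hErank] at hWrank
    omega
  have : Wᗮ ≠ ⊥ := fun h => hWne (Submodule.orthogonal_eq_bot_iff.mp h)
  obtain ⟨w, hwW, hw0⟩ := Submodule.exists_mem_ne_zero_of_ne_bot this
  -- extend w by zero
  let w' : Fin m → ℝ := fun i => if h : i ∈ U then w ⟨i, h⟩ else 0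
  refine ⟨fun i => if w' i = 0 then 1 else Real.sign (w' i), ?_, ?_⟩
  · intro i _
    by_cases h : w' i = 0
    · simp [h]
    · simp only [h, if_false]
      rcases lt_trichotomy (w' i) 0 with h' | h' | h'
      · left; exact Real.sign_of_neg h'
      · exact absurd h' h
      · right; exact Real.sign_of_pos h'
  · intro v hv hmatch
    have hinner : (∑ i : ↥U, v i * w i) = 0 := by
      have := hwW (L v) ⟨v, hv, rfl⟩
      rw [real_inner_comm] at this
      simpa [PiLp.inner_apply, RCLike.inner_apply, L, LinearMap.funLeft,
        WithLp.linearEquiv_symm_apply, PiLp.toLp_apply, mul_comm] using this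
    have hterm : ∀ i : ↥U, 0 ≤ v i * w i := by
      intro i
      by_cases h : w i = 0
      · simp [h]
      · have hs : Real.sign (v i) = Real.sign (w i) := by
          simpa [w', i.2, h] using hmatch i i.2
        exact (sign_mul_pos_of_sign_eq h hs).le
    have hex : ∃ i : ↥U, 0 < v i * w i := by
      obtain ⟨i, hi⟩ : ∃ i : ↥U, w i ≠ 0 := by
        by_contra h
        push_neg at h
        exact hw0 (PiLp.ext fun i => h i)
      refine ⟨i, ?_⟩
      have hs : Real.sign (v i) = Real.sign (w i) := by
        simpa [w', i.2, hi] using hmatch i i.2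
      exact sign_mul_pos_of_sign_eq hi hs
    obtain ⟨i, hi⟩ := hex
    have := Finset.sum_pos' (fun j _ => hterm j) ⟨i, Finset.mem_univ i, hi⟩
    rw [hinner] at this
    exact lt_irrefl 0 this
end
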